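/- Let X be a geodesic metric space, i.e., for any two points x, y ∈ X there is an isometric embedding γ of the interval [0, d(x,y)] into X with γ(0) = x and γ(d(x,y)) = y. Then X fails condition (C) (equivalently, has disconnected Higson corona) if and only if there exists a bounded set X₀ ⊆ X such that for every bounded set C with X₀ ⊆ C ⊆ X, the subspace X \ C is topologically disconnected, i.e., can be partitioned into two nonempty subsets that are open in the subspace topology of X \ C. -/

import Mathlib

open Bornology

def Bornologous {X Y : Type*} [PseudoMetricSpace X] [PseudoMetricSpace Y] (f : X → Y) : Prop :=
  ∀ R : ℝ, 0 < R → ∃ S : ℝ, 0 < S ∧ ∀ x x' : X, dist x x' ≤ R → dist (f x) (f x') ≤ S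

def ProperMap {X Y : Type*} [PseudoMetricSpace X] [PseudoMetricSpace Y] (f : X → Y) : Prop :=
  ∀ B : Set Y, IsBounded B → IsBounded (f ⁻¹' B)

def IsCoarse {X Y : Type*} [PseudoMetricSpace X] [PseudoMetricSpace Y] (f : X → Y) : Prop :=
  Bornologous f ∧ ProperMap f

def Close {X Y : Type*} [PseudoMetricSpace Y] (f g : X → Y) : Prop :=
  ∃ R : ℝ, 0 < R ∧ ∀ x : X, dist (f x) (g x) ≤ R

def coprodDist {X Y : Type*} [MetricSpace X] [MetricSpace Y] (x₀ : X) (y₀ : Y) :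
    X ⊕ Y → X ⊕ Y → ℝ
  | Sum.inl a, Sum.inl b => dist a b
  | Sum.inl a, Sum.inr b => dist a x₀ + 1 + dist y₀ b
  | Sum.inr a, Sum.inl b => dist b x₀ + 1 + dist y₀ a
  | Sum.inr a, Sum.inr b => dist a b

noncomputable def coprodMetric {X Y : Type*} [MetricSpace X] [MetricSpace Y]
    (x₀ : X) (y₀ : Y) : MetricSpace (X ⊕ Y) where
  dist := coprodDist x₀ y₀
  dist_self := by rintro (a | a) <;> simp [coprodDist]
  dist_comm := fun p q => by
    match p, q with
    | Sum.inl a, Sum.inl b => exact dist_comm a b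
    | Sum.inl a, Sum.inr b => rfl
    | Sum.inr a, Sum.inl b => rfl
    | Sum.inr a, Sum.inr b => exact dist_comm a b
  dist_triangle := fun p q r => by
    match p, q, r with
    | Sum.inl a, Sum.inl b, Sum.inl c => exact dist_triangle a b c
    | Sum.inl a, Sum.inl b, Sum.inr c =>
      show dist a x₀ + 1 + dist y₀ c ≤ dist a b + (dist b x₀ + 1 + dist y₀ c)
      have := dist_triangle a b x₀; linarith
    | Sum.inl a, Sum.inr b, Sum.inl c =>
      show dist a c ≤ (dist a x₀ + 1 + dist y₀ b) + (dist c x₀ + 1 + dist y₀ b)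
      have h1 := dist_triangle a x₀ c
      have h2 : dist x₀ c = dist c x₀ := dist_comm _ _
      have h3 := dist_nonneg (x := y₀) (y := b)
      linarith
    | Sum.inl a, Sum.inr b, Sum.inr c =>
      show dist a x₀ + 1 + dist y₀ c ≤ (dist a x₀ + 1 + dist y₀ b) + dist b c
      have := dist_triangle y₀ b c; linarith
    | Sum.inr a, Sum.inl b, Sum.inl c =>
      show dist c x₀ + 1 + dist y₀ a ≤ (dist b x₀ + 1 + dist y₀ a) + dist b c
      have h1 := dist_triangle c b x₀
      have h2 : dist c b = dist b c := dist_comm _ _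
      linarith
    | Sum.inr a, Sum.inl b, Sum.inr c =>
      show dist a c ≤ (dist b x₀ + 1 + dist y₀ a) + (dist b x₀ + 1 + dist y₀ c)
      have h1 := dist_triangle a y₀ c
      have h2 : dist a y₀ = dist y₀ a := dist_comm _ _
      have h3 := dist_nonneg (x := b) (y := x₀)
      linarith
    | Sum.inr a, Sum.inr b, Sum.inl c =>
      show dist c x₀ + 1 + dist y₀ a ≤ dist a b + (dist c x₀ + 1 + dist y₀ b)
      have h1 := dist_triangle y₀ b a
      have h2 : dist b a = dist a b := dist_comm _ _
      linarith
    | Sum.inr a, Sum.inr b, Sum.inr c => exact dist_triangle a b c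
  eq_of_dist_eq_zero := fun {p q} h => by
    match p, q, h with
    | Sum.inl a, Sum.inl b, h => exact congrArg Sum.inl (eq_of_dist_eq_zero h)
    | Sum.inl a, Sum.inr b, h =>
      exfalso
      have h1 := dist_nonneg (x := a) (y := x₀)
      have h2 := dist_nonneg (x := y₀) (y := b)
      have h' : dist a x₀ + 1 + dist y₀ b = 0 := h
      linarith
    | Sum.inr a, Sum.inl b, h =>
      exfalso
      have h1 := dist_nonneg (x := b) (y := x₀)
      have h2 := dist_nonneg (x := y₀) (y := a)
      have h' : dist b x₀ + 1 + dist y₀ a = 0 := h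
      linarith
    | Sum.inr a, Sum.inr b, h => exact congrArg Sum.inr (eq_of_dist_eq_zero h)

/-- Condition (C): every coarse map into a coarse coproduct factors, up to closeness,
through one of the coproduct injections. -/
def CondC (X : Type u) [MetricSpace X] : Prop :=
  ∀ (Y Z : Type u) [MetricSpace Y] [MetricSpace Z] (y₀ : Y) (z₀ : Z) (f : X → Y ⊕ Z),
    letI := coprodMetric y₀ z₀
    IsCoarse f →
      (∃ g : X → Y, IsCoarse g ∧ Close (Sum.inl ∘ g) f) ∨
      (∃ h : X → Z, IsCoarse h ∧ Close (Sum.inr ∘ h) f)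


open Metric Set

universe u

namespace CoronaAux

variable {X : Type u} [MetricSpace X]

/-- Geodesic hypothesis. -/
def Geo (X : Type u) [MetricSpace X] : Prop :=
  ∀ x y : X, ∃ γ : ℝ → X, γ 0 = x ∧ γ (dist x y) = y ∧
      ∀ s ∈ Set.Icc (0 : ℝ) (dist x y), ∀ t ∈ Set.Icc (0 : ℝ) (dist x y),
        dist (γ s) (γ t) = |s - t|

lemma geo_image_preconnected (hgeo : Geo X) (x y : X) :
    ∃ γ : ℝ → X, γ 0 = x ∧ γ (dist x y) = y ∧
      (∀ s ∈ Set.Icc (0 : ℝ) (dist x y), ∀ t ∈ Set.Icc (0 : ℝ) (dist x y),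
        dist (γ s) (γ t) = |s - t|) ∧
      ∀ b ∈ Set.Icc (0:ℝ) (dist x y), IsPreconnected (γ '' Set.Icc 0 b) := by
  obtain ⟨γ, h0, hD, hiso⟩ := hgeo x y
  refine ⟨γ, h0, hD, hiso, ?_⟩
  intro b hb
  have hsub : Set.Icc (0:ℝ) b ⊆ Set.Icc 0 (dist x y) := Set.Icc_subset_Icc le_rfl hb.2
  have hlip : LipschitzOnWith 1 γ (Set.Icc (0:ℝ) b) := by
    rw [lipschitzOnWith_iff_dist_le_mul]
    intro s hs t ht
    rw [hiso s (hsub hs) t (hsub ht), Real.dist_eq]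
    simp
  exact isPreconnected_Icc.image γ hlip.continuousOn

/-- Crossing lemma: if `A`, `B` are disjoint open sets covering `Cᶜ`, `x ∈ A`, `y ∈ B`,
and every point of `C` is at distance `≥ δ` from `x`, then `dist x y ≥ δ`. -/
lemma cross (hgeo : Geo X) {C A B : Set X} (hA : IsOpen A) (hB : IsOpen B)
    (hAB : A ∩ B = ∅) (hcov : Cᶜ ⊆ A ∪ B) {x y : X} (hx : x ∈ A) (hy : y ∈ B)
    {δ : ℝ} (hδ : ∀ c ∈ C, δ ≤ dist x c) : δ ≤ dist x y := by
  by_contra hlt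
  push_neg at hlt
  obtain ⟨γ, h0, hD, hiso, hpre⟩ := geo_image_preconnected hgeo x y
  set D := dist x y with hDdef
  have hDnn : 0 ≤ D := dist_nonneg
  have hDI : D ∈ Set.Icc (0:ℝ) D := ⟨hDnn, le_rfl⟩
  have h0I : (0:ℝ) ∈ Set.Icc (0:ℝ) D := ⟨le_rfl, hDnn⟩
  have hmem : ∀ s ∈ Set.Icc (0:ℝ) D, γ s ∈ A ∪ B := by
    intro s hs
    apply hcov
    intro hsC
    have h1 : δ ≤ dist x (γ s) := hδ _ hsC
    have h2 : dist x (γ s) = |0 - s| := by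
      rw [← h0]; exact hiso 0 h0I s hs
    have : |0 - s| = s := by
      rw [abs_sub_comm, sub_zero, abs_of_nonneg hs.1]
    rw [h2, this] at h1
    have := hs.2
    linarith
  have hK : IsPreconnected (γ '' Set.Icc 0 D) := hpre D hDI
  have hxK : x ∈ γ '' Set.Icc 0 D ∩ A := ⟨⟨0, h0I, h0⟩, hx⟩
  have hyK : y ∈ γ '' Set.Icc 0 D ∩ B := ⟨⟨D, hDI, hD⟩, hy⟩
  obtain ⟨z, _, hzA, hzB⟩ := hK A B hA hB
    (by rintro z ⟨s, hs, rfl⟩; exact hmem s hs) ⟨x, hxK⟩ ⟨y, hyK⟩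
  have : z ∈ A ∩ B := ⟨hzA, hzB⟩
  rw [hAB] at this
  exact this

/-- Hugging lemma: a relatively clopen piece `A` of the complement of a closed ball
contains points at every intermediate radius. -/
lemma hug (hgeo : Geo X) {p : X} {r : ℝ} {A B : Set X} (hA : IsOpen A) (hB : IsOpen B)
    (hAB : A ∩ B = ∅) (hcov : (closedBall p r)ᶜ ⊆ A ∪ B) (hsub : A ⊆ (closedBall p r)ᶜ)
    (hrnn : 0 ≤ r) {v : X} (hv : v ∈ A) {t : ℝ} (ht : r < t) (htv : t ≤ dist v p) :
    ∃ x ∈ A, dist x p = t := by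
  obtain ⟨γ, h0, hD, hiso, hpre⟩ := geo_image_preconnected hgeo v p
  set D := dist v p with hDdef
  have hDnn : 0 ≤ D := dist_nonneg
  have htnn : 0 ≤ t := le_trans hrnn ht.le
  set s₀ := D - t with hs₀
  have hs₀I : s₀ ∈ Set.Icc (0:ℝ) D := ⟨by simp [hs₀]; linarith, by simp [hs₀]; linarith⟩
  have hrad : ∀ s ∈ Set.Icc (0:ℝ) D, dist (γ s) p = D - s := by
    intro s hs
    have := hiso s hs D ⟨hDnn, le_rfl⟩
    rw [hD] at this
    rw [this, abs_sub_comm, abs_of_nonneg (by linarith [hs.2])]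
  have hmem : ∀ s ∈ Set.Icc (0:ℝ) s₀, γ s ∈ A ∪ B := by
    intro s hs
    have hsI : s ∈ Set.Icc (0:ℝ) D := ⟨hs.1, le_trans hs.2 hs₀I.2⟩
    apply hcov
    rw [mem_compl_iff, mem_closedBall, not_le, hrad s hsI]
    have := hs.2
    simp only [hs₀] at this
    linarith
  have hK : IsPreconnected (γ '' Set.Icc 0 s₀) := hpre s₀ hs₀I
  have hvK : v ∈ γ '' Set.Icc 0 s₀ := ⟨0, ⟨le_rfl, hs₀I.1⟩, h0⟩
  have hKA : γ '' Set.Icc 0 s₀ ⊆ A := by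
    intro z hz
    rcases (by rintro z' ⟨s, hs, rfl⟩; exact hmem s hs : γ '' Set.Icc 0 s₀ ⊆ A ∪ B) hz with h | h
    · exact h
    · exfalso
      obtain ⟨z', _, hz'A, hz'B⟩ := hK A B hA hB
        (by rintro z' ⟨s, hs, rfl⟩; exact hmem s hs) ⟨v, hvK, hv⟩ ⟨z, hz, h⟩
      have : z' ∈ A ∩ B := ⟨hz'A, hz'B⟩
      rw [hAB] at this
      exact this
  refine ⟨γ s₀, hKA ⟨s₀, ⟨hs₀I.1, le_rfl⟩, rfl⟩, ?_⟩
  rw [hrad s₀ hs₀I]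
  simp [hs₀]


/-- A bounded relatively clopen nonempty piece of `Cᶜ`. -/
def IsPiece (C V : Set X) : Prop :=
  V.Nonempty ∧ IsBounded V ∧ IsOpen V ∧ V ⊆ Cᶜ ∧ closure V ∩ Cᶜ ⊆ V

lemma piece_compl_open {C V : Set X} (hC : IsClosed C) (hV : IsPiece C V) :
    IsOpen (Cᶜ \ V) := by
  have : Cᶜ \ V = Cᶜ ∩ (closure V)ᶜ := by
    ext x
    constructor
    · rintro ⟨hx, hxV⟩
      exact ⟨hx, fun hcl => hxV (hV.2.2.2.2 ⟨hcl, hx⟩)⟩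
    · rintro ⟨hx, hxV⟩
      exact ⟨hx, fun hv => hxV (subset_closure hv)⟩
  rw [this]
  exact hC.isOpen_compl.inter isClosed_closure.isOpen_compl

lemma piece_union {C V W : Set X} (hV : IsPiece C V) (hW : IsPiece C W) :
    IsPiece C (V ∪ W) := by
  obtain ⟨hVne, hVb, hVo, hVs, hVc⟩ := hV
  obtain ⟨hWne, hWb, hWo, hWs, hWc⟩ := hW
  refine ⟨hVne.inl, hVb.union hWb, hVo.union hWo, union_subset hVs hWs, ?_⟩
  rw [closure_union]
  rintro x ⟨hx1 | hx1, hx2⟩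
  · exact Or.inl (hVc ⟨hx1, hx2⟩)
  · exact Or.inr (hWc ⟨hx1, hx2⟩)

/-- Points of `Cᶜ` outside a piece are far from the piece. -/
lemma piece_far (hgeo : Geo X) {C V : Set X} (hC : IsClosed C) (hV : IsPiece C V)
    {q : X} (hq : q ∈ Cᶜ) (hqV : q ∉ V) {δ : ℝ} (hδ : ∀ c ∈ C, δ ≤ dist q c) :
    ∀ z ∈ V, δ ≤ dist q z := by
  intro z hz
  exact cross hgeo (piece_compl_open hC hV) hV.2.2.1
    (Set.diff_inter_self)
    (fun x hx => by by_cases hxV : x ∈ V; exacts [Or.inr hxV, Or.inl ⟨hx, hxV⟩])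
    ⟨hq, hqV⟩ hz hδ

/-- A partition of the complement of a bounded set into two open sets with one side
bounded and nonempty gives a piece. -/
lemma piece_of_partition {C A B : Set X} (hBo : IsOpen B)
    (hdisj : A ∩ B = ∅) (hcov : A ∪ B = Cᶜ) (hAne : A.Nonempty) (hAb : IsBounded A)
    (hAo : IsOpen A) : IsPiece C A := by
  refine ⟨hAne, hAb, hAo, fun x hx => hcov ▸ Or.inl hx, ?_⟩
  rintro x ⟨hxc, hxC⟩
  have : x ∈ A ∪ B := hcov ▸ hxC
  rcases this with h | h
  · exact h
  · exfalso
    obtain ⟨ε, hε, hball⟩ := Metric.isOpen_iff.mp hBo x h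
    obtain ⟨y, hyA, hy⟩ := Metric.mem_closure_iff.mp hxc ε hε
    have : y ∈ A ∩ B := ⟨hyA, hball (mem_ball'.mpr hy)⟩
    rw [hdisj] at this
    exact this

/-- The key geometric lemma: from the disconnectedness hypothesis we extract a single
bounded set whose complement splits into two unbounded open pieces. -/
lemma exists_sep (hgeo : Geo X) (X₀ : Set X) (hX₀ : IsBounded X₀)
    (hRHS : ∀ C : Set X, IsBounded C → IsClosed C → X₀ ⊆ C →
      ∃ A B : Set X, IsOpen A ∧ IsOpen B ∧ A.Nonempty ∧ B.Nonempty ∧ A ∩ B = ∅ ∧ A ∪ B = Cᶜ)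
    (p : X) :
    ∃ (C P Q : Set X) (r : ℝ), C ⊆ closedBall p r ∧ 0 ≤ r ∧ IsBounded C ∧
      IsOpen P ∧ IsOpen Q ∧ P ∩ Q = ∅ ∧ P ∪ Q = Cᶜ ∧ ¬ IsBounded P ∧ ¬ IsBounded Q := by
  classical
  obtain ⟨r₀', hr₀'⟩ := hX₀.subset_closedBall p
  set r₀ : ℝ := max r₀' 1 with hr₀def
  have hr₀1 : (1:ℝ) ≤ r₀ := le_max_right _ _
  have hr₀0 : (0:ℝ) ≤ r₀ := by linarith
  set C : Set X := closedBall p r₀ with hCdef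
  have hCcl : IsClosed C := Metric.isClosed_closedBall
  have hCb : IsBounded C := isBounded_closedBall
  have hX₀C : X₀ ⊆ C := hr₀'.trans (closedBall_subset_closedBall (le_max_left _ _))
  have hδC : ∀ q : X, q ∈ Cᶜ → (0 < dist q p - r₀ ∧ ∀ c ∈ C, dist q p - r₀ ≤ dist q c) := by
    intro q hq
    constructor
    · have : ¬ dist q p ≤ r₀ := fun h => hq (mem_closedBall.mpr h)
      linarith [not_le.mp this]
    · intro c hc
      have h1 : dist q p ≤ dist q c + dist c p := dist_triangle q c p
      have h2 : dist c p ≤ r₀ := mem_closedBall.mp hc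
      linarith
  have hballC : ∀ q : X, q ∈ Cᶜ → ball q (dist q p - r₀) ⊆ Cᶜ := by
    intro q hq y hy hyC
    rw [mem_ball] at hy
    have h2 : dist y p ≤ r₀ := mem_closedBall.mp hyC
    have h3 : dist q p ≤ dist q y + dist y p := dist_triangle q y p
    rw [dist_comm q y] at h3
    linarith
  by_cases hM : IsBounded (⋃₀ {V : Set X | IsPiece C V})
  · -- Case B : the union of all pieces is bounded; enlarging C by its closure forces
    -- both sides of the next partition to be unbounded.
    set M : Set X := ⋃₀ {V : Set X | IsPiece C V} with hMdef
    set R : Set X := Cᶜ \ M with hRdef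
    have hRfar : ∀ q ∈ R, ∀ z ∈ M, dist q p - r₀ ≤ dist q z := by
      intro q hq z hz
      obtain ⟨V, hV, hzV⟩ := hz
      exact piece_far hgeo hCcl hV hq.1 (fun hqV => hq.2 ⟨V, hV, hqV⟩)
        (hδC q hq.1).2 z hzV
    have hRnotcl : ∀ q ∈ R, q ∉ closure M := by
      intro q hq hcl
      obtain ⟨z, hzM, hz⟩ := Metric.mem_closure_iff.mp hcl _ (hδC q hq.1).1
      have := hRfar q hq z hzM
      linarith
    set Ch : Set X := C ∪ closure M with hChdef
    have hChcl : IsClosed Ch := hCcl.union isClosed_closure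
    have hChb : IsBounded Ch := hCb.union hM.closure
    have hChX₀ : X₀ ⊆ Ch := hX₀C.trans subset_union_left
    have hChc : Chᶜ = R := by
      ext x
      simp only [hChdef, compl_union, mem_inter_iff, mem_compl_iff, hRdef, mem_diff]
      constructor
      · rintro ⟨h1, h2⟩
        exact ⟨h1, fun hM' => h2 (subset_closure hM')⟩
      · rintro ⟨h1, h2⟩
        exact ⟨h1, hRnotcl x ⟨h1, h2⟩⟩
    obtain ⟨A, B, hAo, hBo, hAne, hBne, hABdisj, hABcov⟩ := hRHS Ch hChb hChcl hChX₀
    rw [hChc] at hABcov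
    -- any bounded side would be a piece contained in M, but it is inside R: contradiction
    have key : ∀ A' B' : Set X, IsOpen A' → IsOpen B' → A' ∩ B' = ∅ → A' ∪ B' = R →
        A'.Nonempty → IsBounded A' → False := by
      intro A' B' hA'o hB'o hdisj' hcov' hne' hb'
      have hA'R : A' ⊆ R := fun x hx => hcov' ▸ Or.inl hx
      have hpiece : IsPiece C A' := by
        refine ⟨hne', hb', hA'o, fun x hx => (hA'R hx).1, ?_⟩
        rintro x ⟨hxc, hxC⟩
        by_cases hxM : x ∈ M
        · exfalso
          obtain ⟨V, hV, hxV⟩ := hxM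
          obtain ⟨ε, hε, hball⟩ := Metric.isOpen_iff.mp hV.2.2.1 x hxV
          obtain ⟨y, hyA', hy⟩ := Metric.mem_closure_iff.mp hxc ε hε
          have hyM : y ∈ M := ⟨V, hV, hball (mem_ball'.mpr hy)⟩
          exact (hA'R hyA').2 hyM
        · have hxR : x ∈ R := ⟨hxC, hxM⟩
          have : x ∈ A' ∪ B' := hcov' ▸ hxR
          rcases this with h | h
          · exact h
          · exfalso
            obtain ⟨ε, hε, hball⟩ := Metric.isOpen_iff.mp hB'o x h
            obtain ⟨y, hyA', hy⟩ := Metric.mem_closure_iff.mp hxc ε hε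
            have : y ∈ A' ∩ B' := ⟨hyA', hball (mem_ball'.mpr hy)⟩
            rw [hdisj'] at this
            exact this
      obtain ⟨w, hw⟩ := hne'
      exact (hA'R hw).2 ⟨A', hpiece, hw⟩
    have hAunb : ¬ IsBounded A := fun hb => key A B hAo hBo hABdisj hABcov hAne hb
    have hBunb : ¬ IsBounded B := fun hb => key B A hBo hAo
      (by rw [inter_comm]; exact hABdisj) (by rw [union_comm]; exact hABcov) hBne hb
    obtain ⟨rh', hrh'⟩ := hChb.subset_closedBall p
    refine ⟨Ch, A, B, max rh' 0, hrh'.trans (closedBall_subset_closedBall (le_max_left _ _)),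
      le_max_right _ _, hChb, hAo, hBo, hABdisj, by rw [hABcov, hChc], hAunb, hBunb⟩
  · -- Case A : there are pieces reaching arbitrarily far out; build shells.
    set M : Set X := ⋃₀ {V : Set X | IsPiece C V} with hMdef
    have hfar : ∀ b : ℝ, ∃ V, IsPiece C V ∧ ∃ v ∈ V, b < dist v p := by
      intro b
      have : ¬ (M ⊆ closedBall p b) := fun h => hM (isBounded_closedBall.subset h)
      obtain ⟨x, hxM, hxb⟩ := not_subset.mp this
      obtain ⟨V, hV, hxV⟩ := hxM
      exact ⟨V, hV, x, hxV, not_le.mp (fun h => hxb (mem_closedBall.mpr h))⟩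
    choose Vf hVfp vf hvf hvfd using hfar
    set bnd : Set X → ℝ := fun V =>
      if h : IsBounded V then Classical.choose (h.subset_closedBall p) else 0 with hbnddef
    have hbnd : ∀ V : Set X, IsBounded V → V ⊆ closedBall p (bnd V) := by
      intro V h
      simp only [hbnddef, dif_pos h]
      exact Classical.choose_spec (h.subset_closedBall p)
    set F : ℕ → Set X × ℝ := fun n => Nat.rec
      (Vf (r₀+1), max (bnd (Vf (r₀+1))) (r₀+1))
      (fun _ q => (q.1 ∪ Vf (q.2+1), max (bnd (q.1 ∪ Vf (q.2+1))) (q.2+1))) n with hFdef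
    set W : ℕ → Set X := fun n => (F n).1 with hWdef
    set b : ℕ → ℝ := fun n => (F n).2 with hbdef
    have hW0 : W 0 = Vf (r₀+1) := rfl
    have hb0 : b 0 = max (bnd (Vf (r₀+1))) (r₀+1) := rfl
    have hWs : ∀ n, W (n+1) = W n ∪ Vf (b n + 1) := fun n => rfl
    have hbs : ∀ n, b (n+1) = max (bnd (W (n+1))) (b n + 1) := fun n => rfl
    have hWp : ∀ n, IsPiece C (W n) := by
      intro n
      induction n with
      | zero => exact hW0 ▸ hVfp _
      | succ n ih => rw [hWs n]; exact piece_union ih (hVfp _)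
    have hWb : ∀ n, W n ⊆ closedBall p (b n) := by
      intro n
      cases n with
      | zero =>
        rw [hW0, hb0]
        exact (hbnd _ (hVfp _).2.1).trans (closedBall_subset_closedBall (le_max_left _ _))
      | succ n =>
        rw [hbs n]
        exact (hbnd _ (hWp (n+1)).2.1).trans (closedBall_subset_closedBall (le_max_left _ _))
    have hbmono : ∀ n, b n + 1 ≤ b (n+1) := fun n => (hbs n) ▸ le_max_right _ _
    have hbge : ∀ n, r₀ + 1 ≤ b n := by
      intro n
      induction n with
      | zero => rw [hb0]; exact le_max_right _ _
      | succ n ih => linarith [hbmono n]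
    have hbgen : ∀ n : ℕ, r₀ + 1 + n ≤ b n := by
      intro n
      induction n with
      | zero => simpa using hbge 0
      | succ n ih =>
        have := hbmono n
        push_cast
        push_cast at ih
        linarith
    have hWmono : ∀ m n : ℕ, m ≤ n → W m ⊆ W n := by
      intro m n hmn
      induction hmn with
      | refl => exact subset_rfl
      | @step k hk ih => exact ih.trans ((hWs k) ▸ subset_union_left)
    have hpt : ∀ n, vf (b n + 1) ∈ W (n+1) ∧ b n + 1 < dist (vf (b n + 1)) p :=
      fun n => ⟨(hWs n) ▸ Or.inr (hvf _), hvfd _⟩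
    -- shells
    set S : ℕ → Set X := fun n => W (n+1) \ W n with hSdef
    have hSopen : ∀ n, IsOpen (S n) := by
      intro n
      have : S n = W (n+1) ∩ (Cᶜ \ W n) := by
        ext x
        simp only [hSdef, mem_diff, mem_inter_iff]
        constructor
        · rintro ⟨h1, h2⟩
          exact ⟨h1, (hWp (n+1)).2.2.2.1 h1, h2⟩
        · rintro ⟨h1, _, h3⟩
          exact ⟨h1, h3⟩
      rw [this]
      exact (hWp (n+1)).2.2.1.inter (piece_compl_open hCcl (hWp n))
    have hSsubW : ∀ n, S n ⊆ W (n+1) := fun n x hx => hx.1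
    have hSsubC : ∀ n, S n ⊆ Cᶜ := fun n x hx => (hWp (n+1)).2.2.2.1 hx.1
    set P : Set X := ⋃ k : ℕ, S (2*k) with hPdef
    set Q : Set X := Cᶜ \ P with hQdef
    have hPsubC : P ⊆ Cᶜ := iUnion_subset fun k => hSsubC _
    have hPo : IsOpen P := isOpen_iUnion fun k => hSopen _
    have hPQdisj : P ∩ Q = ∅ := by
      ext x; simp only [hQdef, mem_inter_iff, mem_diff, mem_empty_iff_false, iff_false]
      tauto
    have hPQcov : P ∪ Q = Cᶜ := by
      ext x; simp only [hQdef, mem_union, mem_diff]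
      constructor
      · rintro (h | h)
        · exact hPsubC h
        · exact h.1
      · intro h
        by_cases hx : x ∈ P
        · exact Or.inl hx
        · exact Or.inr ⟨h, hx⟩
    -- openness of Q
    have hQo : IsOpen Q := by
      rw [Metric.isOpen_iff]
      intro q hq
      obtain ⟨hqC, hqP⟩ := hq
      obtain ⟨hδpos, hδq⟩ := hδC q hqC
      have havoid : ∀ n, q ∉ W n → ∀ y ∈ ball q (dist q p - r₀), y ∉ W n := by
        intro n hn y hy hyW
        have := piece_far hgeo hCcl (hWp n) hqC hn hδq y hyW
        rw [mem_ball] at hy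
        rw [dist_comm] at hy
        linarith
      by_cases hex : ∃ m, q ∈ W m
      · set K := Nat.find hex with hKdef
        have hK : q ∈ W K := Nat.find_spec hex
        have hKmin : ∀ m, m < K → q ∉ W m := fun m hm => Nat.find_min hex hm
        obtain ⟨ε, hε, hball⟩ := Metric.isOpen_iff.mp (hWp K).2.2.1 q hK
        refine ⟨min (dist q p - r₀) ε, lt_min hδpos hε, ?_⟩
        intro y hy
        rw [mem_ball, lt_min_iff] at hy
        have hyC : y ∈ Cᶜ := hballC q hqC (mem_ball.mpr hy.1)
        refine ⟨hyC, ?_⟩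
        rintro ⟨_, ⟨k, rfl⟩, hyS⟩
        rcases le_or_gt K (2*k) with hk | hk
        · exact hyS.2 (hWmono K (2*k) hk (hball (mem_ball.mpr hy.2)))
        · have h1 : 2*k+1 ≤ K := hk
          rcases lt_or_eq_of_le h1 with h2 | h2
          · exact havoid (2*k+1) (hKmin _ h2) y (mem_ball.mpr hy.1) (hSsubW _ hyS)
          · have : q ∈ S (2*k) := ⟨h2 ▸ hK, hKmin _ (by omega)⟩
            exact hqP ⟨_, ⟨k, rfl⟩, this⟩
      · push_neg at hex
        refine ⟨dist q p - r₀, hδpos, ?_⟩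
        intro y hy
        refine ⟨hballC q hqC hy, ?_⟩
        rintro ⟨_, ⟨k, rfl⟩, hyS⟩
        exact havoid (2*k+1) (hex (2*k+1)) y hy (hSsubW _ hyS)
    -- points on shells at prescribed radii
    have hSpt : ∀ n, ∃ x ∈ S n, dist x p = b n + 1 := by
      intro n
      have hWsub : W (n+1) ⊆ Cᶜ := (hWp (n+1)).2.2.2.1
      have hcompl : IsOpen (Cᶜ \ W (n+1)) := piece_compl_open hCcl (hWp (n+1))
      have hdisj : W (n+1) ∩ (Cᶜ \ W (n+1)) = ∅ := by
        ext x; simp only [mem_inter_iff, mem_diff, mem_empty_iff_false, iff_false]; tauto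
      have hcov : Cᶜ ⊆ W (n+1) ∪ (Cᶜ \ W (n+1)) := by
        intro x hx
        by_cases h : x ∈ W (n+1)
        · exact Or.inl h
        · exact Or.inr ⟨hx, h⟩
      have hvW := (hpt n).1
      have hvd := (hpt n).2
      have ht1 : r₀ < b n + 1 := by linarith [hbge n]
      obtain ⟨x, hxW, hxd⟩ := hug hgeo (hWp (n+1)).2.2.1 hcompl hdisj hcov hWsub hr₀0
        hvW ht1 hvd.le
      refine ⟨x, ⟨hxW, fun hxWn => ?_⟩, hxd⟩
      have := mem_closedBall.mp (hWb n hxWn)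
      rw [hxd] at this
      linarith
    have hunb : ∀ T : Set X, (∀ k : ℕ, ∃ x ∈ T, (k:ℝ) ≤ dist x p) → ¬ IsBounded T := by
      intro T hT hTb
      obtain ⟨ρ, hρ⟩ := hTb.subset_closedBall p
      obtain ⟨n, hn⟩ := exists_nat_gt ρ
      obtain ⟨x, hxT, hxd⟩ := hT n
      have h1 : dist x p ≤ ρ := mem_closedBall.mp (hρ hxT)
      linarith
    have hdistS : ∀ n : ℕ, ∀ x ∈ S n, dist x p = b n + 1 → (n:ℝ) ≤ dist x p := by
      intro n x hx hxd
      have h2 := hbgen n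
      rw [hxd]
      linarith
    have hPunb : ¬ IsBounded P := by
      apply hunb
      intro k
      obtain ⟨x, hx, hxd⟩ := hSpt (2*k)
      refine ⟨x, ⟨_, ⟨k, rfl⟩, hx⟩, ?_⟩
      have := hdistS (2*k) x hx hxd
      have hk2 : (k:ℝ) ≤ ((2*k : ℕ) : ℝ) := by push_cast; linarith [Nat.cast_nonneg (α := ℝ) k]
      linarith
    have hQunb : ¬ IsBounded Q := by
      apply hunb
      intro k
      obtain ⟨x, hx, hxd⟩ := hSpt (2*k+1)
      have hxQ : x ∈ Q := by
        refine ⟨hSsubC (2*k+1) hx, ?_⟩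
        rintro ⟨_, ⟨j, rfl⟩, hxS⟩
        rcases Nat.lt_or_ge (2*j) (2*k+1) with h | h
        · have h1 : 2*j+1 ≤ 2*k+1 := h
          exact hx.2 (hWmono (2*j+1) (2*k+1) h1 (hSsubW _ hxS))
        · have h2 : 2*k+2 ≤ 2*j := by omega
          exact hxS.2 (hWmono (2*k+2) (2*j) h2 (hSsubW (2*k+1) hx))
      refine ⟨x, hxQ, ?_⟩
      have := hdistS (2*k+1) x hx hxd
      have hk2 : (k:ℝ) ≤ ((2*k+1 : ℕ) : ℝ) := by push_cast; linarith [Nat.cast_nonneg (α := ℝ) k]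
      linarith
    exact ⟨C, P, Q, r₀, subset_rfl, hr₀0, hCb, hPo, hQo, hPQdisj, hPQcov, hPunb, hQunb⟩


/-- From a bounded set with a two-sided unbounded open partition of its complement,
condition (C) fails. -/
lemma notCondC_of_sep {X : Type u} [MetricSpace X] (hgeo : Geo X) (p : X)
    {C P Q : Set X} {r : ℝ} (hCr : C ⊆ closedBall p r) (hr : 0 ≤ r)
    (hPo : IsOpen P) (hQo : IsOpen Q) (hdisj : P ∩ Q = ∅) (hcov : P ∪ Q = Cᶜ)
    (hPunb : ¬ IsBounded P) (hQunb : ¬ IsBounded Q) : ¬ CondC X := by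
  classical
  intro hcond
  letI : MetricSpace (ULift.{u} ℝ ⊕ ULift.{u} ℝ) :=
    coprodMetric (⟨0⟩ : ULift.{u} ℝ) (⟨0⟩ : ULift.{u} ℝ)
  set f : X → ULift.{u} ℝ ⊕ ULift.{u} ℝ :=
    fun x => if x ∈ Q then Sum.inr ⟨dist x p⟩ else Sum.inl ⟨dist x p⟩ with hf
  have dll : ∀ a b : ℝ, dist (Sum.inl ⟨a⟩ : ULift.{u} ℝ ⊕ ULift.{u} ℝ) (Sum.inl ⟨b⟩) = |a - b| := by
    intro a b
    show coprodDist _ _ _ _ = _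
    simp [coprodDist, Real.dist_eq]
  have drr : ∀ a b : ℝ, dist (Sum.inr ⟨a⟩ : ULift.{u} ℝ ⊕ ULift.{u} ℝ) (Sum.inr ⟨b⟩) = |a - b| := by
    intro a b
    show coprodDist _ _ _ _ = _
    simp [coprodDist, Real.dist_eq]
  have dlr : ∀ a b : ℝ, dist (Sum.inl ⟨a⟩ : ULift.{u} ℝ ⊕ ULift.{u} ℝ) (Sum.inr ⟨b⟩) = |a| + 1 + |b| := by
    intro a b
    show coprodDist _ _ _ _ = _
    simp [coprodDist, Real.dist_eq]
  have drl : ∀ a b : ℝ, dist (Sum.inr ⟨a⟩ : ULift.{u} ℝ ⊕ ULift.{u} ℝ) (Sum.inl ⟨b⟩) = |b| + 1 + |a| := by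
    intro a b
    show coprodDist _ _ _ _ = _
    simp [coprodDist, Real.dist_eq]
  -- key crossing estimate for mixed pairs
  have hmix : ∀ {x x' : X} {R : ℝ}, 0 < R → x ∈ Q → x' ∉ Q → dist x x' ≤ R →
      dist x p ≤ R + r + 1 := by
    intro x x' R hR hx hx' hxx'
    by_cases hx'C : x' ∈ C
    · have h1 : dist x' p ≤ r := mem_closedBall.mp (hCr hx'C)
      have h2 : dist x p ≤ dist x x' + dist x' p := dist_triangle x x' p
      linarith
    · have hx'P : x' ∈ P := by
        have : x' ∈ P ∪ Q := hcov ▸ hx'C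
        rcases this with h | h
        · exact h
        · exact absurd h hx'
      by_contra hbig
      push_neg at hbig
      have hxC : x ∈ Cᶜ := hcov ▸ Or.inr hx
      have hδ : ∀ c ∈ C, R + 1 ≤ dist x c := by
        intro c hc
        have h1 : dist c p ≤ r := mem_closedBall.mp (hCr hc)
        have h2 : dist x p ≤ dist x c + dist c p := dist_triangle x c p
        linarith
      have hcov' : Cᶜ ⊆ Q ∪ P := by
        rw [union_comm, hcov]
      have := cross hgeo hQo hPo (by rw [inter_comm]; exact hdisj) hcov' hx hx'P hδ
      linarith
  -- `f` is coarse
  have hcoarse : IsCoarse f := by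
    constructor
    · intro R hR
      refine ⟨2*r + 3*R + 3, by linarith, ?_⟩
      intro x x' hxx'
      have habs : |dist x p - dist x' p| ≤ R :=
        le_trans (abs_dist_sub_le x x' p) hxx'
      by_cases hx : x ∈ Q <;> by_cases hx' : x' ∈ Q <;>
        simp only [hf, if_pos, if_neg, hx, hx', if_true, if_false]
      · rw [drr]
        rw [abs_le] at habs ⊢
        constructor <;> linarith [habs.1, habs.2]
      · rw [drl, abs_of_nonneg dist_nonneg, abs_of_nonneg dist_nonneg]
        have h1 := hmix hR hx hx' hxx'
        have h2 : dist x' p ≤ dist x' x + dist x p := dist_triangle x' x p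
        rw [dist_comm x' x] at h2
        linarith
      · rw [dlr, abs_of_nonneg dist_nonneg, abs_of_nonneg dist_nonneg]
        rw [dist_comm x x'] at hxx'
        have h1 := hmix hR hx' hx hxx'
        have h2 : dist x p ≤ dist x x' + dist x' p := dist_triangle x x' p
        rw [dist_comm x' x] at hxx'
        linarith
      · rw [dll]
        rw [abs_le] at habs ⊢
        constructor <;> linarith [habs.1, habs.2]
    · intro D hD
      obtain ⟨ρ, hρ⟩ := hD.subset_closedBall (Sum.inl (⟨0⟩ : ULift.{u} ℝ))
      have : f ⁻¹' D ⊆ closedBall p ρ := by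
        intro x hx
        have h1 : dist (f x) (Sum.inl (⟨0⟩ : ULift.{u} ℝ)) ≤ ρ := mem_closedBall.mp (hρ hx)
        rw [mem_closedBall]
        by_cases hxQ : x ∈ Q
        · rw [hf] at h1
          simp only [if_pos hxQ] at h1
          rw [drl] at h1
          have := abs_nonneg (dist x p)
          have h2 : dist x p ≤ |dist x p| := le_abs_self _
          simp only [abs_zero] at h1
          linarith
        · rw [hf] at h1
          simp only [if_neg hxQ] at h1
          rw [dll, sub_zero] at h1
          linarith [le_abs_self (dist x p)]
      exact isBounded_closedBall.subset this
  rcases hcond (ULift.{u} ℝ) (ULift.{u} ℝ) ⟨0⟩ ⟨0⟩ f hcoarse with ⟨g, _, R', hR', hcl⟩ | ⟨g, _, R', hR', hcl⟩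
  · apply hQunb
    have : Q ⊆ closedBall p R' := by
      intro x hx
      have h1 := hcl x
      simp only [Function.comp_apply, hf, if_pos hx] at h1
      have h2 : dist ((Sum.inl (g x)) : ULift.{u} ℝ ⊕ ULift.{u} ℝ) (Sum.inr ⟨dist x p⟩)
          = dist (g x) (⟨0⟩ : ULift.{u} ℝ) + 1 + dist (⟨0⟩ : ULift.{u} ℝ) (⟨dist x p⟩ : ULift.{u} ℝ) := rfl
      rw [h2] at h1
      have h3 : dist (⟨0⟩ : ULift.{u} ℝ) (⟨dist x p⟩ : ULift.{u} ℝ) = |dist x p| := by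
        show dist (0:ℝ) (dist x p) = _
        rw [Real.dist_eq, abs_sub_comm, sub_zero]
      rw [h3] at h1
      rw [mem_closedBall]
      have := dist_nonneg (x := g x) (y := (⟨0⟩ : ULift.{u} ℝ))
      linarith [le_abs_self (dist x p)]
    exact isBounded_closedBall.subset this
  · apply hPunb
    have : P ⊆ closedBall p R' := by
      intro x hx
      have hxQ : x ∉ Q := fun hq => by
        have : x ∈ P ∩ Q := ⟨hx, hq⟩
        rw [hdisj] at this
        exact this
      have h1 := hcl x
      simp only [Function.comp_apply, hf, if_neg hxQ] at h1
      have h2 : dist ((Sum.inr (g x)) : ULift.{u} ℝ ⊕ ULift.{u} ℝ) (Sum.inl ⟨dist x p⟩)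
          = dist (⟨dist x p⟩ : ULift.{u} ℝ) (⟨0⟩ : ULift.{u} ℝ) + 1 + dist (⟨0⟩ : ULift.{u} ℝ) (g x) := rfl
      rw [h2] at h1
      have h3 : dist (⟨dist x p⟩ : ULift.{u} ℝ) (⟨0⟩ : ULift.{u} ℝ) = |dist x p| := by
        show dist (dist x p) (0:ℝ) = _
        rw [Real.dist_eq, sub_zero]
      rw [h3] at h1
      rw [mem_closedBall]
      have := dist_nonneg (x := (⟨0⟩ : ULift.{u} ℝ)) (y := g x)
      linarith [le_abs_self (dist x p)]
    exact isBounded_closedBall.subset this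


lemma transfer {X : Type u} [MetricSpace X] {C : Set X} (hC : IsClosed C)
    (h : ∃ U V : Set {x : X // x ∉ C}, IsOpen U ∧ IsOpen V ∧ U.Nonempty ∧ V.Nonempty ∧
      U ∩ V = ∅ ∧ U ∪ V = Set.univ) :
    ∃ A B : Set X, IsOpen A ∧ IsOpen B ∧ A.Nonempty ∧ B.Nonempty ∧ A ∩ B = ∅ ∧ A ∪ B = Cᶜ := by
  obtain ⟨U, V, hUo, hVo, hUne, hVne, hdisj, hcov⟩ := h
  have homap : IsOpenMap ((↑) : {x : X // x ∉ C} → X) := hC.isOpen_compl.isOpenMap_subtype_val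
  have hinj : Function.Injective ((↑) : {x : X // x ∉ C} → X) := Subtype.val_injective
  have hrange : Set.range ((↑) : {x : X // x ∉ C} → X) = Cᶜ := Subtype.range_coe_subtype
  refine ⟨Subtype.val '' U, Subtype.val '' V, homap U hUo, homap V hVo,
    hUne.image _, hVne.image _, ?_, ?_⟩
  · rw [← Set.image_inter hinj, hdisj, Set.image_empty]
  · rw [← Set.image_union, hcov, Set.image_univ, hrange]

lemma forward_core {X Y Z : Type u} [MetricSpace X] [MetricSpace Y] [MetricSpace Z]
    [MetricSpace (Y ⊕ Z)] (y₀ : Y) (z₀ : Z)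
    (dYY : ∀ a b : Y, dist (Sum.inl a : Y ⊕ Z) (Sum.inl b) = dist a b)
    (dZZ : ∀ a b : Z, dist (Sum.inr a : Y ⊕ Z) (Sum.inr b) = dist a b)
    (dLR : ∀ (a : Y) (b : Z), dist (Sum.inl a : Y ⊕ Z) (Sum.inr b) = dist a y₀ + 1 + dist z₀ b)
    (dRL : ∀ (a : Z) (b : Y), dist (Sum.inr a : Y ⊕ Z) (Sum.inl b) = dist b y₀ + 1 + dist z₀ a)
    (f : X → Y ⊕ Z) (hcoarse : IsCoarse f)
    (hnl : ¬ ∃ g : X → Y, IsCoarse g ∧ Close (Sum.inl ∘ g) f)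
    (hnr : ¬ ∃ h : X → Z, IsCoarse h ∧ Close (Sum.inr ∘ h) f) :
    ∃ X₀ : Set X, IsBounded X₀ ∧ ∀ C : Set X, IsBounded C → X₀ ⊆ C →
      ∃ U V : Set {x : X // x ∉ C}, IsOpen U ∧ IsOpen V ∧ U.Nonempty ∧ V.Nonempty ∧
        U ∩ V = ∅ ∧ U ∪ V = Set.univ := by
  classical
  set A : Set X := {x : X | ∃ y, f x = Sum.inl y} with hA
  set B : Set X := {x : X | ∃ z, f x = Sum.inr z} with hB
  have htot : ∀ x : X, x ∈ A ∨ x ∈ B := by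
    intro x
    rcases hfx : f x with yx | zx
    · exact Or.inl ⟨yx, hfx⟩
    · exact Or.inr ⟨zx, hfx⟩
  obtain ⟨S, hSpos, hS⟩ := hcoarse.1 1 one_pos
  set X₀ : Set X := f ⁻¹' (closedBall (Sum.inl y₀) (S+1)) with hX₀
  have hX₀b : IsBounded X₀ := hcoarse.2 _ isBounded_closedBall
  have sep1 : ∀ a ∈ A, a ∉ X₀ → ∀ b ∈ B, ¬ (dist a b ≤ 1) := by
    rintro a ⟨ya, hya⟩ haX b ⟨zb, hzb⟩ hd
    have h1 := hS a b hd
    rw [hya, hzb, dLR] at h1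
    have h2 : ¬ dist (f a) (Sum.inl y₀ : Y ⊕ Z) ≤ S + 1 :=
      fun hle => haX (mem_closedBall.mpr hle)
    rw [hya, dYY] at h2
    push_neg at h2
    have := dist_nonneg (x := z₀) (y := zb)
    linarith
  have sep2 : ∀ b ∈ B, b ∉ X₀ → ∀ a ∈ A, ¬ (dist a b ≤ 1) := by
    rintro b ⟨zb, hzb⟩ hbX a ⟨ya, hya⟩ hd
    have h1 := hS a b hd
    rw [hya, hzb, dLR] at h1
    have h2 : ¬ dist (f b) (Sum.inl y₀ : Y ⊕ Z) ≤ S + 1 :=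
      fun hle => hbX (mem_closedBall.mpr hle)
    rw [hzb, dRL, dist_self] at h2
    push_neg at h2
    have := dist_nonneg (x := ya) (y := y₀)
    linarith
  by_cases hXe : Nonempty X
  case neg =>
    exfalso
    apply hnl
    haveI : IsEmpty X := not_nonempty_iff.mp hXe
    refine ⟨fun x => isEmptyElim x, ⟨fun R hR => ⟨1, one_pos, fun x => isEmptyElim x⟩,
      fun D hD => ?_⟩, 1, one_pos, fun x => isEmptyElim x⟩
    rw [Set.eq_empty_of_isEmpty ((fun x : X => (isEmptyElim x : Y)) ⁻¹' D)]
    exact Bornology.isBounded_empty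
  -- B is unbounded
  have hBunb : ¬ IsBounded B := by
    intro hBb
    apply hnl
    set g : X → Y := fun x => Sum.elim id (fun _ => y₀) (f x) with hg
    have hgA : ∀ (x : X) (ya : Y), f x = Sum.inl ya → g x = ya := by
      intro x ya hx
      show Sum.elim id (fun _ => y₀) (f x) = ya
      rw [hx]; rfl
    have hgB : ∀ (x : X) (zb : Z), f x = Sum.inr zb → g x = y₀ := by
      intro x zb hx
      show Sum.elim id (fun _ => y₀) (f x) = y₀
      rw [hx]; rfl
    have hBz : ∃ Mz : ℝ, ∀ x ∈ B, ∀ zx : Z, f x = Sum.inr zx → dist z₀ zx ≤ Mz := by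
      rcases Set.eq_empty_or_nonempty B with hBe | ⟨b₀, hb₀⟩
      · exact ⟨0, fun x hx => by rw [hBe] at hx; exact absurd hx (Set.notMem_empty x)⟩
      · obtain ⟨zb₀, hzb₀⟩ := hb₀
        obtain ⟨ρ, hρ⟩ := hBb.subset_closedBall b₀
        obtain ⟨S', hS'pos, hS'⟩ := hcoarse.1 (max ρ 1) (lt_of_lt_of_le one_pos (le_max_right _ _))
        refine ⟨dist z₀ zb₀ + S', ?_⟩
        intro x hx zx hzx
        have hd : dist x b₀ ≤ max ρ 1 := le_trans (mem_closedBall.mp (hρ hx)) (le_max_left _ _)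
        have h1 := hS' x b₀ hd
        rw [hzx, hzb₀, dZZ] at h1
        calc dist z₀ zx ≤ dist z₀ zb₀ + dist zb₀ zx := dist_triangle _ _ _
          _ = dist z₀ zb₀ + dist zx zb₀ := by rw [dist_comm zb₀ zx]
          _ ≤ dist z₀ zb₀ + S' := by linarith
    obtain ⟨Mz, hMz⟩ := hBz
    have hMz0 : (0:ℝ) ≤ max Mz 0 := le_max_right _ _
    refine ⟨g, ⟨?_, ?_⟩, 1 + max Mz 0, by linarith, ?_⟩
    · intro R hR
      obtain ⟨S', hS'pos, hS'⟩ := hcoarse.1 R hR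
      refine ⟨S', hS'pos, ?_⟩
      intro x x' hxx'
      have h1 := hS' x x' hxx'
      rcases hfx : f x with yx | zx <;> rcases hfx' : f x' with yx' | zx' <;>
        rw [hfx, hfx'] at h1
      · rw [hgA x yx hfx, hgA x' yx' hfx']; rw [dYY] at h1; exact h1
      · rw [hgA x yx hfx, hgB x' zx' hfx']
        rw [dLR] at h1
        have := dist_nonneg (x := z₀) (y := zx')
        linarith
      · rw [hgB x zx hfx, hgA x' yx' hfx']
        rw [dRL] at h1
        have := dist_nonneg (x := z₀) (y := zx)
        rw [dist_comm y₀ yx']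
        linarith
      · rw [hgB x zx hfx, hgB x' zx' hfx', dist_self]
        linarith
    · intro D hD
      have himg : IsBounded (Sum.inl '' D : Set (Y ⊕ Z)) := by
        obtain ⟨CD, hCD⟩ := Metric.isBounded_iff.mp hD
        refine Metric.isBounded_iff.mpr ⟨CD, ?_⟩
        rintro _ ⟨a, ha, rfl⟩ _ ⟨b, hb, rfl⟩
        rw [dYY a b]
        exact hCD ha hb
      have hsub : g ⁻¹' D ⊆ f ⁻¹' (Sum.inl '' D) ∪ B := by
        intro x hx
        rcases hfx : f x with yx | zx
        · left
          show f x ∈ Sum.inl '' D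
          rw [hfx]
          exact ⟨yx, by rwa [← hgA x yx hfx], rfl⟩
        · right; exact ⟨zx, hfx⟩
      exact ((hcoarse.2 _ himg).union hBb).subset hsub
    · intro x
      rcases hfx : f x with yx | zx
      · rw [Function.comp_apply, hgA x yx hfx, dYY, dist_self]
        linarith
      · rw [Function.comp_apply, hgB x zx hfx, dLR, dist_self]
        have := hMz x ⟨zx, hfx⟩ zx hfx
        have h2 : dist z₀ zx ≤ max Mz 0 := le_trans this (le_max_left _ _)
        linarith
  -- A is unbounded
  have hAunb : ¬ IsBounded A := by
    intro hAb
    apply hnr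
    set g : X → Z := fun x => Sum.elim (fun _ => z₀) id (f x) with hg
    have hgB : ∀ (x : X) (zb : Z), f x = Sum.inr zb → g x = zb := by
      intro x zb hx
      show Sum.elim (fun _ => z₀) id (f x) = zb
      rw [hx]; rfl
    have hgA : ∀ (x : X) (ya : Y), f x = Sum.inl ya → g x = z₀ := by
      intro x ya hx
      show Sum.elim (fun _ => z₀) id (f x) = z₀
      rw [hx]; rfl
    have hAy : ∃ My : ℝ, ∀ x ∈ A, ∀ yx : Y, f x = Sum.inl yx → dist yx y₀ ≤ My := by
      rcases Set.eq_empty_or_nonempty A with hAe | ⟨a₀, ha₀⟩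
      · exact ⟨0, fun x hx => by rw [hAe] at hx; exact absurd hx (Set.notMem_empty x)⟩
      · obtain ⟨ya₀, hya₀⟩ := ha₀
        obtain ⟨ρ, hρ⟩ := hAb.subset_closedBall a₀
        obtain ⟨S', hS'pos, hS'⟩ := hcoarse.1 (max ρ 1) (lt_of_lt_of_le one_pos (le_max_right _ _))
        refine ⟨S' + dist ya₀ y₀, ?_⟩
        intro x hx yx hyx
        have hd : dist x a₀ ≤ max ρ 1 := le_trans (mem_closedBall.mp (hρ hx)) (le_max_left _ _)
        have h1 := hS' x a₀ hd
        rw [hyx, hya₀, dYY] at h1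
        calc dist yx y₀ ≤ dist yx ya₀ + dist ya₀ y₀ := dist_triangle _ _ _
          _ ≤ S' + dist ya₀ y₀ := by linarith
    obtain ⟨My, hMy⟩ := hAy
    have hMy0 : (0:ℝ) ≤ max My 0 := le_max_right _ _
    refine ⟨g, ⟨?_, ?_⟩, max My 0 + 1, by linarith, ?_⟩
    · intro R hR
      obtain ⟨S', hS'pos, hS'⟩ := hcoarse.1 R hR
      refine ⟨S', hS'pos, ?_⟩
      intro x x' hxx'
      have h1 := hS' x x' hxx'
      rcases hfx : f x with yx | zx <;> rcases hfx' : f x' with yx' | zx' <;>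
        rw [hfx, hfx'] at h1
      · rw [hgA x yx hfx, hgA x' yx' hfx', dist_self]
        linarith
      · rw [hgA x yx hfx, hgB x' zx' hfx']
        rw [dLR] at h1
        have := dist_nonneg (x := yx) (y := y₀)
        linarith
      · rw [hgB x zx hfx, hgA x' yx' hfx']
        rw [dRL] at h1
        have := dist_nonneg (x := yx') (y := y₀)
        rw [dist_comm zx z₀]
        linarith
      · rw [hgB x zx hfx, hgB x' zx' hfx']
        rw [dZZ] at h1
        exact h1
    · intro D hD
      have himg : IsBounded (Sum.inr '' D : Set (Y ⊕ Z)) := by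
        obtain ⟨CD, hCD⟩ := Metric.isBounded_iff.mp hD
        refine Metric.isBounded_iff.mpr ⟨CD, ?_⟩
        rintro _ ⟨a, ha, rfl⟩ _ ⟨b, hb, rfl⟩
        rw [dZZ a b]
        exact hCD ha hb
      have hsub : g ⁻¹' D ⊆ f ⁻¹' (Sum.inr '' D) ∪ A := by
        intro x hx
        rcases hfx : f x with yx | zx
        · right; exact ⟨yx, hfx⟩
        · left
          show f x ∈ Sum.inr '' D
          rw [hfx]
          exact ⟨zx, by rwa [← hgB x zx hfx], rfl⟩
      exact ((hcoarse.2 _ himg).union hAb).subset hsub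
    · intro x
      rcases hfx : f x with yx | zx
      · rw [Function.comp_apply, hgA x yx hfx, dRL, dist_self]
        have := hMy x ⟨yx, hfx⟩ yx hfx
        have h2 : dist yx y₀ ≤ max My 0 := le_trans this (le_max_left _ _)
        linarith
      · rw [Function.comp_apply, hgB x zx hfx, dZZ, dist_self]
        linarith
  -- assemble the disconnectedness data
  refine ⟨X₀, hX₀b, ?_⟩
  intro C hCb hX₀C
  obtain ⟨a, haA, haC⟩ := not_subset.mp (fun hsub => hAunb (hCb.subset hsub))
  obtain ⟨b, hbB, hbC⟩ := not_subset.mp (fun hsub => hBunb (hCb.subset hsub))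
  set OA : Set X := ⋃ x ∈ A ∩ Cᶜ, ball x 1 with hOA
  set OB : Set X := ⋃ x ∈ B ∩ Cᶜ, ball x 1 with hOB
  have hOAo : IsOpen OA := isOpen_biUnion (fun _ _ => isOpen_ball)
  have hOBo : IsOpen OB := isOpen_biUnion (fun _ _ => isOpen_ball)
  refine ⟨Subtype.val ⁻¹' OA, Subtype.val ⁻¹' OB,
    hOAo.preimage continuous_subtype_val, hOBo.preimage continuous_subtype_val,
    ⟨⟨a, haC⟩, ?_⟩, ⟨⟨b, hbC⟩, ?_⟩, ?_, ?_⟩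
  · exact mem_iUnion₂.mpr ⟨a, ⟨haA, haC⟩, mem_ball_self one_pos⟩
  · exact mem_iUnion₂.mpr ⟨b, ⟨hbB, hbC⟩, mem_ball_self one_pos⟩
  · rw [Set.eq_empty_iff_forall_notMem]
    rintro ⟨x, hxC⟩ ⟨hx1, hx2⟩
    obtain ⟨a', ⟨ha'A, ha'C⟩, hxa⟩ := mem_iUnion₂.mp hx1
    obtain ⟨b', ⟨hb'B, hb'C⟩, hxb⟩ := mem_iUnion₂.mp hx2
    rcases htot x with hxA | hxB
    · have hd : dist x b' ≤ 1 := le_of_lt (mem_ball.mp hxb)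
      exact sep2 b' hb'B (fun hb'X₀ => hb'C (hX₀C hb'X₀)) x hxA hd
    · have hd : dist x a' ≤ 1 := le_of_lt (mem_ball.mp hxa)
      have hd' : dist a' x ≤ 1 := by rw [dist_comm]; exact hd
      exact sep1 a' ha'A (fun ha'X₀ => ha'C (hX₀C ha'X₀)) x hxB hd'
  · rw [Set.eq_univ_iff_forall]
    rintro ⟨x, hxC⟩
    rcases htot x with hxA | hxB
    · exact Or.inl (mem_iUnion₂.mpr ⟨x, ⟨hxA, hxC⟩, mem_ball_self one_pos⟩)
    · exact Or.inr (mem_iUnion₂.mpr ⟨x, ⟨hxB, hxC⟩, mem_ball_self one_pos⟩)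

lemma forward {X : Type u} [MetricSpace X] (h : ¬ CondC X) :
    ∃ X₀ : Set X, IsBounded X₀ ∧ ∀ C : Set X, IsBounded C → X₀ ⊆ C →
      ∃ U V : Set {x : X // x ∉ C}, IsOpen U ∧ IsOpen V ∧ U.Nonempty ∧ V.Nonempty ∧
        U ∩ V = ∅ ∧ U ∪ V = Set.univ := by
  classical
  have h' : ¬ ∀ (Y Z : Type u) [MetricSpace Y] [MetricSpace Z] (y₀ : Y) (z₀ : Z)
      (f : X → Y ⊕ Z),
      (letI := coprodMetric y₀ z₀
       IsCoarse f →
        (∃ g : X → Y, IsCoarse g ∧ Close (Sum.inl ∘ g) f) ∨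
        (∃ h : X → Z, IsCoarse h ∧ Close (Sum.inr ∘ h) f)) := h
  obtain ⟨Y, h'⟩ := not_forall.mp h'
  obtain ⟨Z, h'⟩ := not_forall.mp h'
  obtain ⟨iY, h'⟩ := not_forall.mp h'
  obtain ⟨iZ, h'⟩ := not_forall.mp h'
  obtain ⟨y₀, h'⟩ := not_forall.mp h'
  obtain ⟨z₀, h'⟩ := not_forall.mp h'
  obtain ⟨f, h'⟩ := not_forall.mp h'
  rw [_root_.not_imp] at h'
  obtain ⟨hcoarse, h'⟩ := h'
  rw [not_or] at h'
  obtain ⟨hnl, hnr⟩ := h'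
  exact @forward_core X Y Z _ _ _ (coprodMetric y₀ z₀) y₀ z₀
    (fun a b => rfl) (fun a b => rfl) (fun a b => rfl) (fun a b => rfl) f hcoarse hnl hnr


end CoronaAux

/-- a geodesic metric space fails condition (C) (equivalently, has disconnected
Higson corona) iff there is a bounded set `X₀` such that the complement of every bounded set
containing `X₀` is topologically disconnected. -/
theorem geodesic_not_condC_iff_disconnected_at_infinity {X : Type u} [MetricSpace X]
    (hgeo : ∀ x y : X, ∃ γ : ℝ → X, γ 0 = x ∧ γ (dist x y) = y ∧
      ∀ s ∈ Set.Icc (0 : ℝ) (dist x y), ∀ t ∈ Set.Icc (0 : ℝ) (dist x y),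
        dist (γ s) (γ t) = |s - t|) :
    ¬ CondC X ↔
      ∃ X₀ : Set X, IsBounded X₀ ∧
        ∀ C : Set X, IsBounded C → X₀ ⊆ C →
          ∃ U V : Set {x : X // x ∉ C},
            IsOpen U ∧ IsOpen V ∧ U.Nonempty ∧ V.Nonempty ∧
            U ∩ V = ∅ ∧ U ∪ V = Set.univ := by
  constructor
  · intro h
    exact CoronaAux.forward h
  · rintro ⟨X₀, hX₀b, hRHS⟩ hcond
    have hne : Nonempty X := by
      obtain ⟨U, V, _, _, ⟨u, _⟩, _, _, _⟩ := hRHS X₀ hX₀b subset_rfl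
      exact ⟨u.val⟩
    obtain ⟨p⟩ := hne
    have hRHS' : ∀ C : Set X, Bornology.IsBounded C → IsClosed C → X₀ ⊆ C →
        ∃ A B : Set X, IsOpen A ∧ IsOpen B ∧ A.Nonempty ∧ B.Nonempty ∧ A ∩ B = ∅ ∧ A ∪ B = Cᶜ :=
      fun C hb hc hsub => CoronaAux.transfer hc (hRHS C hb hsub)
    obtain ⟨C, P, Q, r, hCr, hr, hCb, hPo, hQo, hdisj, hcov, hPunb, hQunb⟩ :=
      CoronaAux.exists_sep hgeo X₀ hX₀b hRHS' p
    exact CoronaAux.notCondC_of_sep hgeo p hCr hr hPo hQo hdisj hcov hPunb hQunb hcond
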